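/- Let f_ε : ℝ² → ℝ be a bounded probability density with sup f_ε ≤ M, K a kernel with ∫K = 1, ∫zK(z)dz = 0, and bounded Hessian assumptions on f_ε (‖∇∇f_ε‖ ≤ M uniformly). Let s : [0,1] → ℝ² be a trajectory, and for timestamps t₁,…,t_m define the weights β_j(t) = K_T(d_T(t_j,t)/h_T)/Σ_{j'} K_T(d_T(t_{j'},t)/h_T). Then the expectation of the conditional KDE given trajectory s satisfies |E[ Σ_j β_j(t) h_X^{-2} K((s(t_j)+ε_j − x)/h_X) ] − f_ε(x − s(t))| ≤ C·h_X² + Σ_j β_j(t)·|f_ε(x − s(t_j)) − f_ε(x − s(t))| for a constant C depending only on K and M. -/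

import Mathlib

open MeasureTheory Real

/-- The cyclic distance on `[0,1]`. -/
noncomputable def dT (t₁ t₂ : ℝ) : ℝ := min |t₁ - t₂| (1 - |t₁ - t₂|)

section Aux

local notation "E2" => EuclideanSpace ℝ (Fin 2)

lemma taylor2_bound {M : ℝ} (hM : 0 ≤ M) {f : E2 → ℝ}
    (hf : ContDiff ℝ 2 f) (hH : ∀ y, ‖iteratedFDeriv ℝ 2 f y‖ ≤ M)
    (y v : E2) : |f (y + v) - f y - fderiv ℝ f y v| ≤ M * ‖v‖ ^ 2 := by
  set g : E2 → (E2 →L[ℝ] ℝ) := fderiv ℝ f with hg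
  have hgdiff : Differentiable ℝ g :=
    (hf.fderiv_right (m := 1) (by norm_num)).differentiable (by norm_num)
  have hder : ∀ p, ‖fderiv ℝ g p‖ ≤ M := by
    intro p
    have h1 : ‖fderiv ℝ g p‖ = ‖iteratedFDeriv ℝ 1 g p‖ := by
      have := norm_iteratedFDeriv_fderiv (𝕜 := ℝ) (f := g) (x := p) (n := 0)
      simpa [norm_iteratedFDeriv_zero] using this
    have h2 : ‖iteratedFDeriv ℝ 1 g p‖ = ‖iteratedFDeriv ℝ 2 f p‖ :=
      norm_iteratedFDeriv_fderiv (𝕜 := ℝ) (f := f) (x := p) (n := 1)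
    rw [h1, h2]; exact hH p
  have hlip : LipschitzWith M.toNNReal g := by
    apply lipschitzWith_of_nnnorm_fderiv_le (𝕜 := ℝ) (fun p => hgdiff p)
    intro p
    rw [← NNReal.coe_le_coe, coe_nnnorm, Real.coe_toNNReal _ hM]
    exact hder p
  have hseg : Convex ℝ (segment ℝ y (y + v)) := convex_segment _ _
  have hbound : ∀ p ∈ segment ℝ y (y + v), ‖fderiv ℝ f p - g y‖ ≤ M * ‖v‖ := by
    intro p hp
    obtain ⟨a, b, ha, hb, hab, rfl⟩ := hp
    have hpy : a • y + b • (y + v) - y = b • v := by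
      rw [smul_add]
      rw [show a • y + (b • y + b • v) = (a + b) • y + b • v by rw [add_smul]; abel,
        hab, one_smul]
      abel
    calc ‖fderiv ℝ f (a • y + b • (y + v)) - g y‖
        ≤ M * ‖(a • y + b • (y + v)) - y‖ := by
          have := hlip.dist_le_mul (a • y + b • (y + v)) y
          rw [dist_eq_norm, dist_eq_norm] at this
          simpa [Real.coe_toNNReal _ hM] using this
      _ ≤ M * ‖v‖ := by
          rw [hpy, norm_smul, Real.norm_eq_abs, abs_of_nonneg hb]
          have : b * ‖v‖ ≤ 1 * ‖v‖ := by
            apply mul_le_mul_of_nonneg_right _ (norm_nonneg _)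
            linarith
          nlinarith [norm_nonneg v, mul_le_mul_of_nonneg_left this hM]
  have key := hseg.norm_image_sub_le_of_norm_fderiv_le'
    (fun p _ => (hf.differentiable (by norm_num)).differentiableAt)
    hbound (left_mem_segment ℝ y (y + v)) (right_mem_segment ℝ y (y + v))
  simpa [add_sub_cancel_left, Real.norm_eq_abs, sq, mul_assoc] using key

lemma cov_lemma (K fε : E2 → ℝ) (y : E2) {hX : ℝ} (h : 0 < hX) :
    (∫ η, (hX ^ 2)⁻¹ * K (hX⁻¹ • (η - y)) * fε η) = ∫ z, K z * fε (y + hX • z) := by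
  have h1 : (∫ η, (hX ^ 2)⁻¹ * K (hX⁻¹ • (η - y)) * fε η)
      = ∫ u, (hX ^ 2)⁻¹ * K (hX⁻¹ • u) * fε (y + u) := by
    rw [← integral_add_left_eq_self (μ := volume)
      (fun η => (hX ^ 2)⁻¹ * K (hX⁻¹ • (η - y)) * fε η) y]
    simp [add_sub_cancel_left]
  have h2 := Measure.integral_comp_smul volume
    (fun u => (hX ^ 2)⁻¹ * K (hX⁻¹ • u) * fε (y + u)) hX
  rw [finrank_euclideanSpace_fin] at h2
  have h3 : (fun z : E2 => (hX ^ 2)⁻¹ * K (hX⁻¹ • hX • z) * fε (y + hX • z))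
      = fun z => (hX ^ 2)⁻¹ * (K z * fε (y + hX • z)) := by
    funext z
    rw [smul_smul, inv_mul_cancel₀ h.ne', one_smul, mul_assoc]
  have habs : |((hX : ℝ) ^ 2)⁻¹| = (hX ^ 2)⁻¹ := abs_of_pos (by positivity)
  rw [habs, h3, integral_const_mul, smul_eq_mul] at h2
  rw [h1]
  exact (mul_left_cancel₀ (a := (hX ^ 2)⁻¹) (by positivity) h2).symm

lemma kernel_step {M : ℝ} (hM : 0 ≤ M) {fε : E2 → ℝ}
    (hfε_bound : ∀ y, |fε y| ≤ M)
    (hfε_C2 : ContDiff ℝ 2 fε)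
    (htaylor : ∀ y v : E2, |fε (y + v) - fε y - fderiv ℝ fε y v| ≤ M * ‖v‖ ^ 2)
    {K : E2 → ℝ} (hKpos : ∀ z, 0 ≤ K z) (hKint : ∫ z, K z = 1)
    (hKmean : (∫ z, K z • z : E2) = 0)
    (hKsecond : Integrable (fun z => K z * ‖z‖ ^ 2))
    (y : E2) {hX : ℝ} (h : 0 < hX) :
    |(∫ z, K z * fε (y + hX • z)) - fε y| ≤ (M * ∫ z, K z * ‖z‖ ^ 2) * hX ^ 2 := by
  have hKI : Integrable K := by
    by_contra hc
    rw [integral_undef hc] at hKint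
    exact one_ne_zero hKint.symm
  have hfc : Continuous fε := hfε_C2.continuous
  have hmeas : AEStronglyMeasurable (fun z : E2 => K z * fε (y + hX • z)) volume :=
    hKI.aestronglyMeasurable.mul
      ((hfc.comp (continuous_const.add (continuous_id.const_smul hX))).aestronglyMeasurable)
  have hA : Integrable (fun z : E2 => K z * fε (y + hX • z)) := by
    refine (hKI.const_mul M).mono hmeas (ae_of_all _ fun z => ?_)
    rw [Real.norm_eq_abs, Real.norm_eq_abs, abs_mul, abs_mul,
      abs_of_nonneg (hKpos z), abs_of_nonneg hM]
    rw [mul_comm M (K z)]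
    exact mul_le_mul_of_nonneg_left (hfε_bound _) (hKpos z)
  have hB : Integrable (fun z : E2 => K z • z) := by
    refine (hKI.add hKsecond).mono
      (hKI.aestronglyMeasurable.smul aestronglyMeasurable_id) (ae_of_all _ fun z => ?_)
    rw [norm_smul, Real.norm_eq_abs, abs_of_nonneg (hKpos z), Real.norm_eq_abs]
    have h2 : K z * ‖z‖ ≤ K z + K z * ‖z‖ ^ 2 := by
      nlinarith [hKpos z, norm_nonneg z, sq_nonneg (‖z‖ - 1)]
    calc K z * ‖z‖ ≤ K z + K z * ‖z‖ ^ 2 := h2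
      _ ≤ |K z + K z * ‖z‖ ^ 2| := le_abs_self _
  set L : E2 →L[ℝ] ℝ := hX • fderiv ℝ fε y with hL
  have hLint : Integrable (fun z : E2 => L (K z • z)) := L.integrable_comp hB
  have hLapp : ∀ z : E2, L (K z • z) = K z * fderiv ℝ fε y (hX • z) := by
    intro z
    rw [hL]
    simp only [ContinuousLinearMap.smul_apply, (fderiv ℝ fε y).map_smul, smul_eq_mul]
    ring
  set R : E2 → ℝ := fun z => fε (y + hX • z) - fε y - fderiv ℝ fε y (hX • z) with hR
  have hfun : (fun z => K z * R z)
      = fun z => K z * fε (y + hX • z) - K z * fε y - L (K z • z) := by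
    funext z; rw [hLapp]; simp only [hR]; ring
  have hRint : Integrable (fun z => K z * R z) := by
    rw [hfun]
    exact (hA.sub (hKI.mul_const (fε y))).sub hLint
  have hsub : Integrable (fun z : E2 => K z * fε (y + hX • z) - K z * fε y) :=
    hA.sub (hKI.mul_const (fε y))
  have hsplit : (∫ z, K z * fε (y + hX • z)) - fε y = ∫ z, K z * R z := by
    rw [hfun, integral_sub hsub hLint,
      integral_sub hA (hKI.mul_const (fε y)), L.integral_comp_comm hB, hKmean, map_zero,
      integral_mul_const, hKint, one_mul, sub_zero]
  rw [hsplit]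
  calc |∫ z, K z * R z| ≤ ∫ z, |K z * R z| := by
        simpa only [Real.norm_eq_abs] using
          norm_integral_le_integral_norm (μ := volume) (fun z => K z * R z)
    _ ≤ ∫ z, M * hX ^ 2 * (K z * ‖z‖ ^ 2) := by
        apply integral_mono hRint.abs (hKsecond.const_mul (M * hX ^ 2))
        intro z
        show |K z * R z| ≤ M * hX ^ 2 * (K z * ‖z‖ ^ 2)
        rw [abs_mul, abs_of_nonneg (hKpos z)]
        calc K z * |R z| ≤ K z * (M * (hX ^ 2 * ‖z‖ ^ 2)) := by
              apply mul_le_mul_of_nonneg_left _ (hKpos z)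
              have ht := htaylor y (hX • z)
              rw [norm_smul, Real.norm_eq_abs, abs_of_pos h, mul_pow] at ht
              calc |R z| ≤ M * (hX ^ 2 * ‖z‖ ^ 2) := by
                    simpa [hR, mul_pow] using ht
                _ = M * (hX ^ 2 * ‖z‖ ^ 2) := rfl
          _ = M * hX ^ 2 * (K z * ‖z‖ ^ 2) := by ring
    _ = (M * ∫ z, K z * ‖z‖ ^ 2) * hX ^ 2 := by
        rw [integral_const_mul]; ring

lemma convex_combo_bound {m : ℕ} (β I d : Fin m → ℝ) (f0 c : ℝ)
    (hβ : ∀ j, 0 ≤ β j) (hsum : ∑ j, β j = 1)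
    (key : ∀ j, |I j - f0| ≤ c + d j) :
    |∑ j, β j * I j - f0| ≤ c + ∑ j, β j * d j := by
  calc |∑ j, β j * I j - f0| = |∑ j, β j * (I j - f0)| := by
        rw [show ∑ j, β j * (I j - f0) = ∑ j, β j * I j - (∑ j, β j) * f0 by
          rw [Finset.sum_mul]; rw [← Finset.sum_sub_distrib]; congr 1; funext j; ring,
          hsum, one_mul]
    _ ≤ ∑ j, |β j * (I j - f0)| := Finset.abs_sum_le_sum_abs _ _
    _ = ∑ j, β j * |I j - f0| := by
        refine Finset.sum_congr rfl fun j _ => ?_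
        rw [abs_mul, abs_of_nonneg (hβ j)]
    _ ≤ ∑ j, β j * (c + d j) :=
        Finset.sum_le_sum fun j _ => mul_le_mul_of_nonneg_left (key j) (hβ j)
    _ = c + ∑ j, β j * d j := by
        simp only [mul_add, Finset.sum_add_distrib, ← Finset.sum_mul, hsum, one_mul]

end Aux

/-- Bias bound for the conditional KDE given a trajectory `s`.  With iid noise of
bounded density `f_ε` (with bounded Hessian `≤ M`), a kernel `K` with `∫K = 1` and vanishing
first moment, and time-kernel weights `β_j(t) = K_T(d_T(t_j,t)/h_T)/Σ_{j'}K_T(d_T(t_{j'},t)/h_T)`,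
the expectation of the conditional KDE satisfies
`|E[Σ_j β_j(t) h_X⁻² K((s(t_j)+ε_j−x)/h_X)] − f_ε(x−s(t))|
  ≤ C·h_X² + Σ_j β_j(t)·|f_ε(x−s(t_j)) − f_ε(x−s(t))|`
for a constant `C` depending only on `K` and `M`. -/
theorem conditional_kde_bias_bound
    (M : ℝ) (fε : EuclideanSpace ℝ (Fin 2) → ℝ)
    (hfε_nonneg : ∀ y, 0 ≤ fε y) (hfε_int : ∫ y, fε y = 1)
    (hfε_bound : ∀ y, fε y ≤ M)
    (hfε_C2 : ContDiff ℝ 2 fε)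
    (hHess : ∀ y, ‖iteratedFDeriv ℝ 2 fε y‖ ≤ M)
    (K : EuclideanSpace ℝ (Fin 2) → ℝ)
    (hKpos : ∀ z, 0 ≤ K z) (hKint : ∫ z, K z = 1)
    (hKmean : (∫ z, K z • z : EuclideanSpace ℝ (Fin 2)) = 0)
    (hKsecond : Integrable (fun z => K z * ‖z‖ ^ 2))
    (KT : ℝ → ℝ) (hKT : ∀ u, 0 ≤ KT u)
    (m : ℕ) (t_ : Fin m → ℝ) (hT : ℝ) (hhT : 0 < hT) :
    ∃ C : ℝ, 0 ≤ C ∧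
      ∀ (s : ℝ → EuclideanSpace ℝ (Fin 2)) (x : EuclideanSpace ℝ (Fin 2)) (t : ℝ)
        (hX : ℝ), 0 < hX →
        0 < (∑ j', KT (dT (t_ j') t / hT)) →
        |(∑ j, (KT (dT (t_ j) t / hT) / ∑ j', KT (dT (t_ j') t / hT)) *
            ∫ η, (hX ^ 2)⁻¹ * K (hX⁻¹ • (s (t_ j) + η - x)) * fε η) - fε (x - s t)| ≤
          C * hX ^ 2 +
            ∑ j, (KT (dT (t_ j) t / hT) / ∑ j', KT (dT (t_ j') t / hT)) *
              |fε (x - s (t_ j)) - fε (x - s t)| := by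
  have hM : 0 ≤ M := le_trans (hfε_nonneg 0) (hfε_bound 0)
  have hfε_abs : ∀ y, |fε y| ≤ M := fun y => by
    rw [abs_of_nonneg (hfε_nonneg y)]; exact hfε_bound y
  have htaylor := taylor2_bound hM hfε_C2 hHess
  refine ⟨M * ∫ z, K z * ‖z‖ ^ 2,
    mul_nonneg hM (integral_nonneg fun z => mul_nonneg (hKpos z) (sq_nonneg _)), ?_⟩
  intro s x t hX hhX hpos
  have hβ : ∀ j : Fin m, 0 ≤ KT (dT (t_ j) t / hT) / ∑ j', KT (dT (t_ j') t / hT) :=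
    fun j => div_nonneg (hKT _) hpos.le
  have hβsum : ∑ j : Fin m, KT (dT (t_ j) t / hT) / ∑ j', KT (dT (t_ j') t / hT) = 1 := by
    rw [← Finset.sum_div]; exact div_self hpos.ne'
  have key : ∀ j : Fin m,
      |(∫ η, (hX ^ 2)⁻¹ * K (hX⁻¹ • (s (t_ j) + η - x)) * fε η) - fε (x - s t)| ≤
        (M * ∫ z, K z * ‖z‖ ^ 2) * hX ^ 2 + |fε (x - s (t_ j)) - fε (x - s t)| := by
    intro j
    have hrw : (∫ η, (hX ^ 2)⁻¹ * K (hX⁻¹ • (s (t_ j) + η - x)) * fε η)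
        = ∫ z, K z * fε ((x - s (t_ j)) + hX • z) := by
      rw [show (fun η : EuclideanSpace ℝ (Fin 2) =>
            (hX ^ 2)⁻¹ * K (hX⁻¹ • (s (t_ j) + η - x)) * fε η)
          = fun η => (hX ^ 2)⁻¹ * K (hX⁻¹ • (η - (x - s (t_ j)))) * fε η by
        funext η
        rw [show s (t_ j) + η - x = η - (x - s (t_ j)) by abel]]
      exact cov_lemma K fε (x - s (t_ j)) hhX
    rw [hrw]
    have h1 := kernel_step hM hfε_abs hfε_C2 htaylor hKpos hKint hKmean hKsecond
      (x - s (t_ j)) hhX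
    calc |(∫ z, K z * fε ((x - s (t_ j)) + hX • z)) - fε (x - s t)|
        ≤ |(∫ z, K z * fε ((x - s (t_ j)) + hX • z)) - fε (x - s (t_ j))| +
            |fε (x - s (t_ j)) - fε (x - s t)| := by
          exact abs_sub_le _ _ _
      _ ≤ (M * ∫ z, K z * ‖z‖ ^ 2) * hX ^ 2 + |fε (x - s (t_ j)) - fε (x - s t)| :=
          add_le_add h1 le_rfl
  exact convex_combo_bound
    (fun j => KT (dT (t_ j) t / hT) / ∑ j', KT (dT (t_ j') t / hT))
    (fun j => ∫ η, (hX ^ 2)⁻¹ * K (hX⁻¹ • (s (t_ j) + η - x)) * fε η)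
    (fun j => |fε (x - s (t_ j)) - fε (x - s t)|)
    (fε (x - s t)) ((M * ∫ z, K z * ‖z‖ ^ 2) * hX ^ 2) hβ hβsum key
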